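/- Let Ω̃₂ = {(τs, s) : 1 ≤ s < τ} ∪ {(x,y) : 0 ≤ x ≤ y}, where τ = (√5+1)/2. Given any function ρ̃ : Ω̃₂ → ℝ, there exists a unique function ρ : [0,∞)² → ℝ extending ρ̃ and satisfying (2x+y)ρ(x,y) = (x+y)ρ(x,x+y) + x·ρ(x+y,x) for all x,y ≥ 0. -/

import Mathlib

noncomputable def τ : ℝ := (Real.sqrt 5 + 1) / 2

def Omega2 : Set (ℝ × ℝ) :=
  {p | ∃ s : ℝ, 1 ≤ s ∧ s < τ ∧ p = (τ * s, s)} ∪ {p | 0 ≤ p.1 ∧ p.1 ≤ p.2}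

lemma sqrt5 : Real.sqrt 5 ^ 2 = 5 := Real.sq_sqrt (by norm_num)
lemma sqrt5_gt : 2 < Real.sqrt 5 := by nlinarith [sqrt5, Real.sqrt_nonneg 5]
lemma sqrt5_lt : Real.sqrt 5 < 3 := by nlinarith [sqrt5, Real.sqrt_nonneg 5]
lemma tau_sq : τ ^ 2 = τ + 1 := by have h := sqrt5; unfold τ; nlinarith [h]
lemma one_lt_tau : 1 < τ := by unfold τ; nlinarith [sqrt5_gt]
lemma tau_lt_two : τ < 2 := by unfold τ; nlinarith [sqrt5_lt]
lemma tau_pos : 0 < τ := by linarith [one_lt_tau]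

def step (p : ℝ × ℝ) : ℝ × ℝ := (p.2, p.1 - p.2)

def Pr (p : ℝ × ℝ) : Prop := 0 < p.2 ∧ p.2 < p.1

lemma d_step (p : ℝ × ℝ) : (step p).1 - τ * (step p).2 = -τ * (p.1 - τ * p.2) := by
  have h := tau_sq
  simp only [step]
  linear_combination -p.2 * h

lemma d_iter (p : ℝ × ℝ) (n : ℕ) :
    (step^[n] p).1 - τ * (step^[n] p).2 = (-τ)^n * (p.1 - τ * p.2) := by
  induction n with
  | zero => simp
  | succ n ih =>
    rw [Function.iterate_succ_apply', d_step, ih]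
    ring

lemma escape_exists (x y : ℝ) (h : x ≠ τ * y) : ∃ n, ¬ Pr (step^[n] (x, y)) := by
  by_contra hc
  push_neg at hc
  -- all iterates satisfy Pr
  set p : ℝ × ℝ := (x, y)
  have hsnd : ∀ n, (step^[n+1] p).2 < (step^[n] p).2 := by
    intro n
    have h1 := hc (n+1)
    have h2 := hc n
    rw [Function.iterate_succ_apply'] at h1 ⊢
    simp only [step, Pr] at h1 ⊢
    linarith [h1.2]
  have hsndle : ∀ n, (step^[n] p).2 ≤ p.2 := by
    intro n
    induction n with
    | zero => simp
    | succ n ih => linarith [hsnd n]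
  have hfst : ∀ n, (step^[n] p).1 < 2 * (step^[n] p).2 := by
    intro n
    have h1 := hc (n+1)
    rw [Function.iterate_succ_apply'] at h1
    simp only [step, Pr] at h1
    linarith [h1.1, h1.2]
  have hd0 : p.1 - τ * p.2 ≠ 0 := by
    simp only [p]
    intro hz; apply h; linarith
  have hbig : ∃ n : ℕ, (2 + τ) * p.2 / |p.1 - τ * p.2| < τ ^ n :=
    pow_unbounded_of_one_lt _ one_lt_tau
  obtain ⟨n, hn⟩ := hbig
  have habs : |((step^[n] p).1 - τ * (step^[n] p).2)| = τ ^ n * |p.1 - τ * p.2| := by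
    rw [d_iter, abs_mul, abs_pow, abs_neg, abs_of_pos tau_pos]
  have hpos : 0 < |p.1 - τ * p.2| := abs_pos.mpr hd0
  have hlt : (2 + τ) * p.2 < τ ^ n * |p.1 - τ * p.2| := by
    rw [div_lt_iff₀ hpos] at hn
    linarith
  have hb : |((step^[n] p).1 - τ * (step^[n] p).2)| ≤ (2 + τ) * p.2 := by
    have h1 := hc n
    simp only [Pr] at h1
    have h2 := hfst n
    have h3 := hsndle n
    have hp2 : 0 < (step^[n] p).2 := h1.1
    rw [abs_le]
    constructor <;> nlinarith [tau_pos]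
  rw [habs] at hb
  linarith


lemma tau_inv : τ * (τ - 1) = 1 := by nlinarith [tau_sq]

lemma exA (s : ℝ) : ∃ n, s < τ ^ (n+1) := by
  obtain ⟨n, hn⟩ := pow_unbounded_of_one_lt (y := τ) s one_lt_tau
  exact ⟨n, lt_of_lt_of_le hn (pow_le_pow_right₀ (le_of_lt one_lt_tau) (Nat.le_succ n))⟩

lemma exB (s : ℝ) (h : 0 < s) : ∃ n, 1 ≤ τ ^ n * s := by
  obtain ⟨n, hn⟩ := pow_unbounded_of_one_lt (y := τ) (1/s) one_lt_tau
  refine ⟨n, ?_⟩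
  rw [div_lt_iff₀ h] at hn
  linarith

open scoped Classical in
noncomputable def nu (s : ℝ) : ℕ :=
  if 1 ≤ s then Nat.find (exA s)
  else if h : 0 < s then Nat.find (exB s h)
  else 0

open scoped Classical in
noncomputable def mu (x y : ℝ) : ℕ :=
  if 0 < y ∧ x = τ * y then nu y
  else if h : x ≠ τ * y then Nat.find (escape_exists x y h)
  else 0

open scoped Classical

lemma nu_of_one_le (s : ℝ) (h : 1 ≤ s) : nu s = Nat.find (exA s) := by
  rw [nu, if_pos h]

lemma nu_of_lt_one (s : ℝ) (h0 : 0 < s) (h : s < 1) : nu s = Nat.find (exB s h0) := by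
  rw [nu, if_neg (not_le.mpr h), dif_pos h0]

lemma mu_line (x y : ℝ) (h0 : 0 < y) (h : x = τ * y) : mu x y = nu y := by
  rw [mu, if_pos ⟨h0, h⟩]

lemma mu_offline (x y : ℝ) (h : x ≠ τ * y) (h2 : ¬ (0 < y ∧ x = τ * y)) :
    mu x y = Nat.find (escape_exists x y h) := by
  rw [mu, if_neg h2, dif_pos h]

lemma mu_line_down (x y : ℝ) (hy : 0 < y) (hx : x = τ * y) (hge : τ ≤ y) :
    mu y (x - y) < mu x y := by
  have h1 : (1:ℝ) ≤ y := le_trans (le_of_lt one_lt_tau) hge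
  have hline2 : y = τ * (x - y) := by rw [hx]; nlinarith [tau_sq]
  have hxy_pos : 0 < x - y := by nlinarith [one_lt_tau]
  have hxy1 : (1:ℝ) ≤ x - y := by rw [hx]; nlinarith [tau_sq, tau_pos]
  rw [mu_line x y hy hx, mu_line y (x - y) hxy_pos hline2,
    nu_of_one_le y h1, nu_of_one_le (x - y) hxy1]
  set m := Nat.find (exA y) with hm
  have hm1 : 1 ≤ m := by
    rw [Nat.one_le_iff_ne_zero]
    intro hz
    have := Nat.find_spec (exA y)
    rw [← hm, hz] at this
    simp only [pow_one, zero_add] at this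
    linarith
  have hspec : y < τ ^ (m+1) := by have := Nat.find_spec (exA y); rwa [← hm] at this
  have hle : Nat.find (exA (x - y)) ≤ m - 1 := by
    apply Nat.find_le
    show x - y < τ ^ (m - 1 + 1)
    have hmm : m - 1 + 1 = m := by omega
    rw [hmm, hx]
    have hps : τ ^ (m+1) = τ ^ m * τ := pow_succ τ m
    have hl : (τ * y - y) * τ = y := by linear_combination y * tau_sq
    have key : (τ * y - y) * τ < τ ^ m * τ := by rw [hl]; linarith
    have := lt_of_mul_lt_mul_right key (le_of_lt tau_pos)
    linarith
  omega

lemma mu_line_up (x y : ℝ) (hy : 0 < y) (hy1 : y < 1) (hx : x = τ * y) :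
    mu (τ * x) x < mu x y := by
  have hxpos : 0 < x := by rw [hx]; exact mul_pos tau_pos hy
  rw [mu_line x y hy hx, mu_line (τ * x) x hxpos rfl, nu_of_lt_one y hy hy1]
  set m := Nat.find (exB y hy) with hm
  have hm1 : 1 ≤ m := by
    rw [Nat.one_le_iff_ne_zero]
    intro hz
    have := Nat.find_spec (exB y hy)
    rw [← hm, hz] at this
    simp only [pow_zero, one_mul] at this
    linarith
  have hspec : 1 ≤ τ ^ m * y := by have := Nat.find_spec (exB y hy); rwa [← hm] at this
  by_cases hx1 : (1:ℝ) ≤ x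
  · rw [nu_of_one_le x hx1]
    have : Nat.find (exA x) ≤ 0 := by
      apply Nat.find_le
      show x < τ ^ (0+1)
      rw [pow_one, hx]
      nlinarith [tau_pos]
    omega
  · rw [nu_of_lt_one x hxpos (not_le.mp hx1)]
    have hle : Nat.find (exB x hxpos) ≤ m - 1 := by
      apply Nat.find_le
      show 1 ≤ τ ^ (m-1) * x
      rw [hx]
      have h2 : τ ^ (m-1) * (τ * y) = τ ^ (m-1+1) * y := by ring
      have hmm : m - 1 + 1 = m := by omega
      rw [h2, hmm]
      exact hspec
    omega

lemma mu_generic (x y : ℝ) (hy : 0 < y) (hyx : y < x) (hne : x ≠ τ * y) :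
    mu y (x - y) < mu x y := by
  have hne2 : y ≠ τ * (x - y) := by
    intro hh
    apply hne
    nlinarith [tau_sq, tau_pos]
  have hnl1 : ¬ (0 < y ∧ x = τ * y) := by rintro ⟨_, h⟩; exact hne h
  have hnl2 : ¬ (0 < x - y ∧ y = τ * (x - y)) := by rintro ⟨_, h⟩; exact hne2 h
  rw [mu_offline x y hne hnl1, mu_offline y (x - y) hne2 hnl2]
  set m := Nat.find (escape_exists x y hne) with hm
  have hm1 : 1 ≤ m := by
    rw [Nat.one_le_iff_ne_zero]
    intro hz
    have := Nat.find_spec (escape_exists x y hne)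
    rw [← hm, hz] at this
    simp only [Function.iterate_zero, id_eq] at this
    exact this ⟨hy, hyx⟩
  have hspec : ¬ Pr (step^[m] (x, y)) := by
    have := Nat.find_spec (escape_exists x y hne)
    rwa [← hm] at this
  have hle : Nat.find (escape_exists y (x - y) hne2) ≤ m - 1 := by
    apply Nat.find_le
    show ¬ Pr (step^[m-1] (y, x - y))
    have hst : (y, x - y) = step (x, y) := rfl
    have hmm : m - 1 + 1 = m := by omega
    rw [hst, ← Function.iterate_succ_apply]
    simp only [Nat.succ_eq_add_one, hmm]
    exact hspec
  omega

noncomputable def rho (ρ₀ : Omega2 → ℝ) (x y : ℝ) : ℝ :=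
  if h : (x, y) ∈ Omega2 then ρ₀ ⟨(x, y), h⟩
  else if hneg : x < 0 ∨ y < 0 then 0
  else if hy : y = 0 then
    ρ₀ ⟨(x, x), Or.inr ⟨le_of_not_gt (fun hc => hneg (Or.inl hc)), le_refl x⟩⟩
  else if hl : x = τ * y ∧ y < 1 then
    (τ * ρ₀ ⟨(x, τ * x), Or.inr ⟨le_of_not_gt (fun hc => hneg (Or.inl hc)),
        by
          have hx0 : 0 ≤ x := le_of_not_gt (fun hc => hneg (Or.inl hc))
          show x ≤ τ * x
          nlinarith [one_lt_tau, mul_nonneg (sub_nonneg.mpr one_lt_tau.le) hx0]⟩⟩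
      + rho ρ₀ (τ * x) x) / (τ + 1)
  else
    ((x + y) * rho ρ₀ y (x - y)
      - x * ρ₀ ⟨(y, x), Or.inr ⟨le_of_not_gt (fun hc => hneg (Or.inr hc)),
          by
            have hx0 : 0 ≤ x := le_of_not_gt (fun hc => hneg (Or.inl hc))
            by_contra hc
            exact h (Or.inr ⟨hx0, le_of_not_ge hc⟩)⟩⟩) / y
termination_by mu x y
decreasing_by
  · have hy0 : 0 < y := lt_of_le_of_ne (le_of_not_gt (fun hc => hneg (Or.inr hc))) (Ne.symm hy)
    exact mu_line_up x y hy0 hl.2 hl.1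
  · have hx0 : 0 ≤ x := le_of_not_gt (fun hc => hneg (Or.inl hc))
    have hy0 : 0 < y := lt_of_le_of_ne (le_of_not_gt (fun hc => hneg (Or.inr hc))) (Ne.symm hy)
    have hyx : y < x := by
      by_contra hc
      exact h (Or.inr ⟨hx0, le_of_not_gt hc⟩)
    by_cases hline : x = τ * y
    · have h1y : 1 ≤ y := by
        by_contra hc
        exact hl ⟨hline, lt_of_not_ge hc⟩
      have hty : τ ≤ y := by
        by_contra hc
        exact h (Or.inl ⟨y, h1y, lt_of_not_ge hc, by rw [hline]⟩)
      exact mu_line_down x y hy0 hline hty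
    · exact mu_generic x y hy0 hyx hline

variable {ρ₀ : Omega2 → ℝ}

lemma rho_mem (x y : ℝ) (hp : (x, y) ∈ Omega2) : rho ρ₀ x y = ρ₀ ⟨(x, y), hp⟩ := by
  rw [rho, dif_pos hp]

lemma notmem_of (x y : ℝ) (hyx : y < x) (hy1 : ¬ (x = τ * y ∧ 1 ≤ y ∧ y < τ)) :
    (x, y) ∉ Omega2 := by
  rintro (⟨s, hs1, hs2, hs3⟩ | ⟨h1, h2⟩)
  · have hxx : x = τ * s := congrArg Prod.fst hs3
    have hyy : y = s := congrArg Prod.snd hs3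
    exact hy1 ⟨by rw [hxx, hyy], by rw [hyy]; exact ⟨hs1, hs2⟩⟩
  · exact absurd h2 (not_le.mpr hyx)

lemma rho_y0 (x : ℝ) (hx : 0 < x) (hm : (x, x) ∈ Omega2) :
    rho ρ₀ x 0 = ρ₀ ⟨(x, x), hm⟩ := by
  have hnm : (x, 0) ∉ Omega2 := by
    apply notmem_of x 0 hx
    rintro ⟨-, h1, -⟩; linarith
  rw [rho, dif_neg hnm, dif_neg (by push_neg; exact ⟨le_of_lt hx, le_refl 0⟩), dif_pos rfl]

lemma rho_lineup (x y : ℝ) (hx : x = τ * y) (h0 : 0 < y) (h1 : y < 1)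
    (hm : (x, τ * x) ∈ Omega2) :
    rho ρ₀ x y = (τ * ρ₀ ⟨(x, τ * x), hm⟩ + rho ρ₀ (τ * x) x) / (τ + 1) := by
  have hyx : y < x := by rw [hx]; nlinarith [one_lt_tau]
  have hnm : (x, y) ∉ Omega2 := by
    apply notmem_of x y hyx
    rintro ⟨-, hg, -⟩; linarith
  rw [rho, dif_neg hnm, dif_neg (by push_neg; constructor <;> linarith), dif_neg (ne_of_gt h0),
    dif_pos ⟨hx, h1⟩]

lemma rho_generic (x y : ℝ) (h0 : 0 < y) (hyx : y < x) (hnm : (x, y) ∉ Omega2)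
    (hnl : ¬(x = τ * y ∧ y < 1)) (hm : (y, x) ∈ Omega2) :
    rho ρ₀ x y = ((x + y) * rho ρ₀ y (x - y) - x * ρ₀ ⟨(y, x), hm⟩) / y := by
  rw [rho, dif_neg hnm, dif_neg (by push_neg; constructor <;> linarith), dif_neg (ne_of_gt h0),
    dif_neg hnl]

lemma rho_fe (ρ₀ : Omega2 → ℝ) (x y : ℝ) (hx : 0 ≤ x) (hy : 0 ≤ y) :
    (2 * x + y) * rho ρ₀ x y = (x + y) * rho ρ₀ x (x + y) + x * rho ρ₀ (x + y) x := by
  rcases hx.eq_or_lt with hx0 | hx0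
  · subst hx0
    simp only [zero_add, mul_zero, zero_mul]
    ring
  · rcases hy.eq_or_lt with hy0 | hy0
    · subst hy0
      have hm : (x, x) ∈ Omega2 := Or.inr ⟨le_of_lt hx0, le_refl x⟩
      simp only [add_zero]
      rw [rho_y0 x hx0 hm, rho_mem x x hm]
      ring
    · by_cases hc : x = τ * y ∧ y < 1
      · -- line-up case
        have hm1 : (x, τ * x) ∈ Omega2 := by
          refine Or.inr ⟨le_of_lt hx0, ?_⟩
          show x ≤ τ * x
          nlinarith [one_lt_tau]
        have hτx : τ * x = x + y := by
          rw [hc.1]; linear_combination y * tau_sq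
        rw [rho_lineup x y hc.1 hy0 hc.2 hm1, ← hτx, rho_mem x (τ * x) hm1]
        set A := ρ₀ ⟨(x, τ * x), hm1⟩ with hA
        set B := rho ρ₀ (τ * x) x with hB
        have hτ1 : τ + 1 ≠ 0 := by linarith [tau_pos]
        rw [mul_div_assoc'] at *
        rw [div_eq_iff hτ1]
        rw [hc.1]
        linear_combination (-(τ * y * A) - y * B) * tau_sq
      · -- generic case: evaluate rho (x+y) x
        have hm : (x, x + y) ∈ Omega2 :=
          Or.inr ⟨by show 0 ≤ x; linarith, by show x ≤ x + y; linarith⟩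
        have hyx : x < x + y := by linarith
        have hnm : (x + y, x) ∉ Omega2 := by
          apply notmem_of _ _ hyx
          rintro ⟨he, h1x, hxτ⟩
          apply hc
          refine ⟨by linear_combination (-τ) * he + (-x) * tau_sq, ?_⟩
          nlinarith [tau_sq, mul_pos (sub_pos.mpr one_lt_tau) (sub_pos.mpr hxτ)]
        have hnl : ¬ (x + y = τ * x ∧ x < 1) := by
          rintro ⟨he, hx1⟩
          apply hc
          refine ⟨by linear_combination (-τ) * he + (-x) * tau_sq, ?_⟩
          nlinarith [tau_lt_two, mul_pos (sub_pos.mpr one_lt_tau) (sub_pos.mpr hx1)]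
        rw [rho_generic (x + y) x hx0 hyx hnm hnl hm, rho_mem x (x + y) hm]
        have hsub : x + y - x = y := by ring
        rw [hsub, mul_div_assoc', mul_div_cancel_left₀ _ (ne_of_gt hx0)]
        ring

lemma uniq_zero (δ : ℝ → ℝ → ℝ)
    (h0 : ∀ p : ℝ × ℝ, p ∈ Omega2 → δ p.1 p.2 = 0)
    (heq : ∀ x y : ℝ, 0 ≤ x → 0 ≤ y →
      (2 * x + y) * δ x y = (x + y) * δ x (x + y) + x * δ (x + y) x) :
    ∀ x y : ℝ, 0 ≤ x → 0 ≤ y → δ x y = 0 := by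
  have key : ∀ n : ℕ, ∀ x y : ℝ, 0 ≤ x → 0 ≤ y → mu x y ≤ n → δ x y = 0 := by
    intro n
    induction n using Nat.strong_induction_on with
    | _ n IH =>
      intro x y hx hy hn
      by_cases hmem : (x, y) ∈ Omega2
      · exact h0 (x, y) hmem
      · have hyx : y < x := by
          by_contra hcon
          exact hmem (Or.inr ⟨hx, le_of_not_gt hcon⟩)
        rcases hy.eq_or_lt with hy0 | hy0
        · -- y = 0
          have hxpos : 0 < x := by rw [← hy0] at hyx; exact hyx
          have h1 := heq x 0 hx le_rfl
          simp only [add_zero] at h1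
          have hxx : δ x x = 0 := h0 (x, x) (Or.inr ⟨hx, le_refl x⟩)
          rw [hxx] at h1
          have h2 : (2 * x) * δ x 0 = 0 := by linarith
          rw [← hy0]
          exact (mul_eq_zero.mp h2).resolve_left (by linarith)
        · by_cases hup : x = τ * y ∧ y < 1
          · -- line-up
            have hτx : τ * x = x + y := by rw [hup.1]; linear_combination y * tau_sq
            have hlt := mu_line_up x y hy0 hup.2 hup.1
            rw [hτx] at hlt
            have hδ1 : δ x (x + y) = 0 :=
              h0 (x, x + y) (Or.inr ⟨hx, by show x ≤ x + y; linarith⟩)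
            have hδ2 : δ (x + y) x = 0 :=
              IH (mu (x + y) x) (lt_of_lt_of_le hlt hn) (x + y) x (by linarith) hx le_rfl
            have h2 := heq x y hx hy
            rw [hδ1, hδ2] at h2
            have h3 : (2 * x + y) * δ x y = 0 := by linarith
            exact (mul_eq_zero.mp h3).resolve_left (by linarith)
          · -- down step
            have hlt : mu y (x - y) < mu x y := by
              by_cases hline : x = τ * y
              · have h1y : 1 ≤ y := by
                  by_contra hcon
                  exact hup ⟨hline, lt_of_not_ge hcon⟩
                have hty : τ ≤ y := by
                  by_contra hcon
                  exact hmem (Or.inl ⟨y, h1y, lt_of_not_ge hcon, by rw [hline]⟩)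
                exact mu_line_down x y hy0 hline hty
              · exact mu_generic x y hy0 hyx hline
            have h2 := heq y (x - y) (by linarith) (by linarith)
            have hsub : y + (x - y) = x := by ring
            rw [hsub] at h2
            have hδ1 : δ y x = 0 := h0 (y, x) (Or.inr ⟨by show 0 ≤ y; linarith,
              by show y ≤ x; linarith⟩)
            have hδ2 : δ y (x - y) = 0 :=
              IH (mu y (x - y)) (lt_of_lt_of_le hlt hn) y (x - y) (by linarith)
                (by linarith) le_rfl
            rw [hδ1, hδ2] at h2
            have h3 : y * δ x y = 0 := by linarith
            exact (mul_eq_zero.mp h3).resolve_left (by linarith)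
  intro x y hx hy
  exact key (mu x y) x y hx hy le_rfl

theorem unique_extension_rho (ρ₀ : Omega2 → ℝ) :
    (∃ ρ : ℝ → ℝ → ℝ,
      (∀ (p : ℝ × ℝ) (hp : p ∈ Omega2), ρ p.1 p.2 = ρ₀ ⟨p, hp⟩) ∧
      (∀ x y : ℝ, 0 ≤ x → 0 ≤ y →
        (2 * x + y) * ρ x y = (x + y) * ρ x (x + y) + x * ρ (x + y) x)) ∧
    (∀ ρ ρ' : ℝ → ℝ → ℝ,
      ((∀ (p : ℝ × ℝ) (hp : p ∈ Omega2), ρ p.1 p.2 = ρ₀ ⟨p, hp⟩) ∧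
        (∀ x y : ℝ, 0 ≤ x → 0 ≤ y →
          (2 * x + y) * ρ x y = (x + y) * ρ x (x + y) + x * ρ (x + y) x)) →
      ((∀ (p : ℝ × ℝ) (hp : p ∈ Omega2), ρ' p.1 p.2 = ρ₀ ⟨p, hp⟩) ∧
        (∀ x y : ℝ, 0 ≤ x → 0 ≤ y →
          (2 * x + y) * ρ' x y = (x + y) * ρ' x (x + y) + x * ρ' (x + y) x)) →
      ∀ x y : ℝ, 0 ≤ x → 0 ≤ y → ρ x y = ρ' x y) := by
  constructor
  · refine ⟨rho ρ₀, ?_, ?_⟩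
    · intro p hp
      exact rho_mem p.1 p.2 hp
    · exact rho_fe ρ₀
  · rintro ρ ρ' ⟨he1, hf1⟩ ⟨he2, hf2⟩ x y hx hy
    have hz := uniq_zero (fun a b => ρ a b - ρ' a b)
      (by
        intro p hp
        rw [he1 p hp, he2 p hp, sub_self])
      (by
        intro a b ha hb
        linear_combination hf1 a b ha hb - hf2 a b ha hb)
      x y hx hy
    simpa [sub_eq_zero] using hz
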